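/- For r ≥ 1, the number of homomorphisms from (ℤ/2ℤ)^r to Sym(n) satisfies h_n((ℤ/2ℤ)^r) ≤ 4^{rn} · n^r · n^{(1 − 2^{−r})n} for all n ≥ 1. -/

import Mathlib

set_option maxHeartbeats 1000000

open Finset Equiv Function

namespace CardHomAux

noncomputable section

abbrev G (r : ℕ) := Multiplicative (Fin r → ZMod 2)

noncomputable instance (r : ℕ) : LinearOrder (G r) :=
  LinearOrder.lift' (Fintype.equivFin (G r)) (Fintype.equivFin (G r)).injective

lemma fintype_cardG (r : ℕ) : Fintype.card (G r) = 2 ^ r := by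
  rw [Fintype.card_congr (Multiplicative.toAdd (α := Fin r → ZMod 2))]
  simp [Fintype.card_pi, ZMod.card]

lemma ncardG (r : ℕ) : Nat.card (G r) = 2 ^ r := by
  rw [Nat.card_eq_fintype_card, fintype_cardG]

variable {r n : ℕ}

/-- the orbit of `0` under the action induced by `φ`. -/
def Orb (φ : G r →* Equiv.Perm (Fin (n + 1))) : Finset (Fin (n + 1)) :=
  image (fun g => φ g 0) univ

lemma zero_mem_Orb (φ : G r →* Equiv.Perm (Fin (n + 1))) : 0 ∈ Orb φ :=
  mem_image.2 ⟨1, mem_univ _, by simp⟩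

lemma Orb_card_pos (φ : G r →* Equiv.Perm (Fin (n + 1))) : 0 < (Orb φ).card :=
  card_pos.2 ⟨0, zero_mem_Orb φ⟩

lemma Orb_card_le (φ : G r →* Equiv.Perm (Fin (n + 1))) : (Orb φ).card ≤ 2 ^ r := by
  calc (Orb φ).card ≤ (univ : Finset (G r)).card := card_image_le
  _ = 2 ^ r := by rw [card_univ, fintype_cardG]

lemma Orb_card_le' (φ : G r →* Equiv.Perm (Fin (n + 1))) : (Orb φ).card ≤ n + 1 := by
  simpa using card_le_card (subset_univ (Orb φ))

lemma mem_Orb_iff (φ : G r →* Equiv.Perm (Fin (n + 1))) (g : G r) (x : Fin (n + 1)) :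
    x ∈ Orb φ ↔ φ g x ∈ Orb φ := by
  constructor
  · rintro hx
    obtain ⟨g', -, hg'⟩ := mem_image.1 hx
    exact mem_image.2 ⟨g * g', mem_univ _, by rw [map_mul, Equiv.Perm.mul_apply, hg']⟩
  · rintro hx
    obtain ⟨g', -, hg'⟩ := mem_image.1 hx
    refine mem_image.2 ⟨g⁻¹ * g', mem_univ _, ?_⟩
    rw [map_mul, Equiv.Perm.mul_apply, hg', map_inv]
    exact (φ g).symm_apply_apply x

/-- the stabilizer of `0`, as a `ZMod 2`-submodule. -/
def stab (φ : G r →* Equiv.Perm (Fin (n + 1))) : Submodule (ZMod 2) (Fin r → ZMod 2) where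
  carrier := {v | φ (Multiplicative.ofAdd v) 0 = 0}
  add_mem' := by
    intro a b ha hb
    simp only [Set.mem_setOf_eq] at *
    have : Multiplicative.ofAdd (a + b) =
        Multiplicative.ofAdd a * Multiplicative.ofAdd b := rfl
    rw [this, map_mul, Equiv.Perm.mul_apply, hb, ha]
  zero_mem' := by
    simp only [Set.mem_setOf_eq]
    have : Multiplicative.ofAdd (0 : Fin r → ZMod 2) = 1 := rfl
    rw [this, map_one]
    rfl
  smul_mem' := by
    intro c x hx
    have hc : c = 0 ∨ c = 1 := by revert c; decide
    simp only [Set.mem_setOf_eq] at *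
    rcases hc with h | h <;> subst h
    · rw [zero_smul]
      have : Multiplicative.ofAdd (0 : Fin r → ZMod 2) = 1 := rfl
      rw [this, map_one]; rfl
    · rwa [one_smul]

lemma mem_stab_iff (φ : G r →* Equiv.Perm (Fin (n + 1))) (v : Fin r → ZMod 2) :
    v ∈ stab φ ↔ φ (Multiplicative.ofAdd v) 0 = 0 := Iff.rfl

lemma sub_mem_stab_iff (φ : G r →* Equiv.Perm (Fin (n + 1))) (a b : Fin r → ZMod 2) :
    a - b ∈ stab φ ↔ φ (Multiplicative.ofAdd a) 0 = φ (Multiplicative.ofAdd b) 0 := by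
  have h1 : Multiplicative.ofAdd (a - b) =
      (Multiplicative.ofAdd b)⁻¹ * Multiplicative.ofAdd a := by
    rw [sub_eq_neg_add]; rfl
  rw [mem_stab_iff, h1, map_mul, map_inv, Equiv.Perm.mul_apply]
  constructor
  · intro h
    have := congrArg (φ (Multiplicative.ofAdd b)) h
    simpa using this
  · intro h
    rw [h]
    simp

/-- canonical section: a group element sending `0` to `y`. -/
def Gsec (φ : G r →* Equiv.Perm (Fin (n + 1))) (y : Fin (n + 1)) : G r :=
  if h : (univ.filter (fun g : G r => φ g 0 = y)).Nonempty then
    (univ.filter (fun g : G r => φ g 0 = y)).min' h else 1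

lemma Gsec_spec (φ : G r →* Equiv.Perm (Fin (n + 1))) {y : Fin (n + 1)} (hy : y ∈ Orb φ) :
    φ (Gsec φ y) 0 = y := by
  obtain ⟨g, -, hg⟩ := mem_image.1 hy
  have hne : (univ.filter (fun g : G r => φ g 0 = y)).Nonempty := ⟨g, by simp [hg]⟩
  rw [Gsec, dif_pos hne]
  have := Finset.min'_mem _ hne
  simpa using this

def SS (φ : G r →* Equiv.Perm (Fin (n + 1))) (y : Fin (n + 1)) : G r :=
  if y = 0 then 1 else Gsec φ y

lemma SS_spec (φ : G r →* Equiv.Perm (Fin (n + 1))) {y : Fin (n + 1)} (hy : y ∈ Orb φ) :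
    φ (SS φ y) 0 = y := by
  by_cases h : y = 0
  · subst h; simp [SS]
  · rw [SS, if_neg h]; exact Gsec_spec φ hy

/-- the orbit is in bijection with the quotient by the stabilizer. -/
def quotEquivOrb (φ : G r →* Equiv.Perm (Fin (n + 1))) :
    ((Fin r → ZMod 2) ⧸ stab φ) ≃ {x // x ∈ Orb φ} where
  toFun q := Quotient.liftOn' q
    (fun v => (⟨φ (Multiplicative.ofAdd v) 0,
        mem_image.2 ⟨Multiplicative.ofAdd v, mem_univ _, rfl⟩⟩ : {x // x ∈ Orb φ}))
    (by
      intro a b hab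
      have h1 : (Submodule.Quotient.mk a : (Fin r → ZMod 2) ⧸ stab φ)
          = Submodule.Quotient.mk b := by
        rw [← Submodule.Quotient.mk''_eq_mk, ← Submodule.Quotient.mk''_eq_mk]
        exact Quotient.sound' hab
      have h2 : a - b ∈ stab φ := (Submodule.Quotient.eq _).1 h1
      exact Subtype.ext ((sub_mem_stab_iff φ a b).1 h2))
  invFun y := Submodule.Quotient.mk (Multiplicative.toAdd (SS φ y.1))
  left_inv := by
    intro q
    induction q using Quotient.inductionOn' with
    | h v =>
      have hv : (Quotient.mk'' v : (Fin r → ZMod 2) ⧸ stab φ) = Submodule.Quotient.mk v :=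
        Submodule.Quotient.mk''_eq_mk v
      have hmem : φ (Multiplicative.ofAdd v) 0 ∈ Orb φ :=
        mem_image.2 ⟨Multiplicative.ofAdd v, mem_univ _, rfl⟩
      simp only [Quotient.liftOn'_mk'']
      rw [hv, Submodule.Quotient.eq, sub_mem_stab_iff]
      simp only [ofAdd_toAdd]
      exact SS_spec φ hmem
  right_inv := by
    intro y
    apply Subtype.ext
    have : φ (Multiplicative.ofAdd (Multiplicative.toAdd (SS φ y.1))) 0 = y.1 := by
      simp only [ofAdd_toAdd]
      exact SS_spec φ y.2
    exact this

lemma card_quot (φ : G r →* Equiv.Perm (Fin (n + 1))) :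
    Nat.card ((Fin r → ZMod 2) ⧸ stab φ) = (Orb φ).card := by
  rw [Nat.card_congr (quotEquivOrb φ)]
  exact Nat.card_eq_finsetCard _

lemma card_quot_eq_pow (φ : G r →* Equiv.Perm (Fin (n + 1))) :
    Nat.card ((Fin r → ZMod 2) ⧸ stab φ)
      = 2 ^ (Module.finrank (ZMod 2) ((Fin r → ZMod 2) ⧸ stab φ)) := by
  haveI : Fact (Nat.Prime 2) := ⟨Nat.prime_two⟩
  haveI : Fintype ((Fin r → ZMod 2) ⧸ stab φ) := Fintype.ofFinite _
  rw [Nat.card_eq_fintype_card, Module.card_eq_pow_finrank (K := ZMod 2), ZMod.card]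

lemma Orb_card_eq_two_pow (φ : G r →* Equiv.Perm (Fin (n + 1))) :
    (Orb φ).card = 2 ^ (Nat.log 2 (Orb φ).card) := by
  have h1 := card_quot φ
  have h2 := card_quot_eq_pow φ
  rw [h1] at h2
  rw [h2, Nat.log_pow (by norm_num)]

lemma exists_w (φ : G r →* Equiv.Perm (Fin (n + 1))) (c : ℕ)
    (hc : (Orb φ).card = 2 ^ c) :
    ∃ w : (Fin r → ZMod 2) →ₗ[ZMod 2] (Fin c → ZMod 2), LinearMap.ker w = stab φ := by
  haveI : Fact (Nat.Prime 2) := ⟨Nat.prime_two⟩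
  have h2 := card_quot_eq_pow φ
  rw [card_quot φ, hc] at h2
  have hfr : Module.finrank (ZMod 2) ((Fin r → ZMod 2) ⧸ stab φ) = c :=
    (Nat.pow_right_injective (le_refl 2) h2.symm)
  let b : Module.Basis (Fin c) (ZMod 2) ((Fin r → ZMod 2) ⧸ stab φ) :=
    (Module.finBasis (ZMod 2) _).reindex (finCongr hfr)
  refine ⟨b.equivFun.toLinearMap ∘ₗ (stab φ).mkQ, ?_⟩
  rw [LinearMap.ker_comp, LinearEquiv.ker, Submodule.comap_bot, Submodule.ker_mkQ]


/-- complement equivalence, abstract in the invariant set `B`. -/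
def cEquivB (B : Finset (Fin (n + 1))) (m : ℕ) (hm : Bᶜ.card = m) :
    {x : Fin (n + 1) // x ∈ Bᶜ} ≃ Fin m := ((Bᶜ).orderIsoOfFin hm).toEquiv.symm

lemma cEquivB_congr {B B' : Finset (Fin (n + 1))} (h : B = B') {m : ℕ}
    (hm : Bᶜ.card = m) (hm' : B'ᶜ.card = m) {y : Fin (n + 1)} (hy : y ∈ Bᶜ) (hy' : y ∈ B'ᶜ) :
    cEquivB B m hm ⟨y, hy⟩ = cEquivB B' m hm' ⟨y, hy'⟩ := by subst h; rfl

def restdatB (φ : G r →* Equiv.Perm (Fin (n + 1))) (B : Finset (Fin (n + 1)))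
    (hB : ∀ (g : G r) (x : Fin (n + 1)), x ∈ Bᶜ ↔ φ g x ∈ Bᶜ) (m : ℕ) (hm : Bᶜ.card = m) :
    G r →* Equiv.Perm (Fin m) where
  toFun g := (cEquivB B m hm).permCongr ((φ g).subtypePerm (fun x => (hB g x).symm))
  map_one' := by
    ext x
    simp [Equiv.permCongr_apply, Equiv.Perm.subtypePerm_apply]
  map_mul' g h := by
    ext x
    simp [Equiv.permCongr_apply, Equiv.Perm.subtypePerm_apply, Equiv.Perm.mul_apply, map_mul]

lemma restdatB_spec (φ : G r →* Equiv.Perm (Fin (n + 1))) (B : Finset (Fin (n + 1)))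
    (hB : ∀ (g : G r) (x : Fin (n + 1)), x ∈ Bᶜ ↔ φ g x ∈ Bᶜ) (m : ℕ) (hm : Bᶜ.card = m)
    (g : G r) {y : Fin (n + 1)} (hy : y ∈ Bᶜ) :
    restdatB φ B hB m hm g (cEquivB B m hm ⟨y, hy⟩)
      = cEquivB B m hm ⟨φ g y, (hB g y).1 hy⟩ := by
  simp [restdatB, Equiv.permCongr_apply, Equiv.Perm.subtypePerm_apply]

lemma orderIsoOfFin_congr {s t : Finset (Fin (n + 1))} (hst : s = t) {k : ℕ}
    (hs : s.card = k) (ht : t.card = k) (i : Fin k) :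
    (s.orderIsoOfFin hs i : Fin (n + 1)) = t.orderIsoOfFin ht i := by subst hst; rfl

lemma Orb_compl_card (φ : G r →* Equiv.Perm (Fin (n + 1))) :
    ((Orb φ)ᶜ).card = n - ((Orb φ).card - 1) := by
  rw [Finset.card_compl]
  have h1 := Orb_card_pos φ
  have h2 := Orb_card_le' φ
  simp only [Fintype.card_fin]
  omega

lemma Orb_inv (φ : G r →* Equiv.Perm (Fin (n + 1))) :
    ∀ (g : G r) (x : Fin (n + 1)), x ∈ (Orb φ)ᶜ ↔ φ g x ∈ (Orb φ)ᶜ := by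
  intro g x
  rw [Finset.mem_compl, Finset.mem_compl, not_iff_not]
  exact mem_Orb_iff φ g x

lemma Orb_erase_card (φ : G r →* Equiv.Perm (Fin (n + 1))) :
    ((Orb φ).erase 0).card = (Orb φ).card - 1 :=
  card_erase_of_mem (zero_mem_Orb φ)

lemma Orb_card_pow_log (φ : G r →* Equiv.Perm (Fin (n + 1))) :
    (Orb φ).card = 2 ^ (Nat.log 2 ((Orb φ).card - 1 + 1)) := by
  have := Orb_card_pos φ
  rw [Nat.sub_add_cancel this]
  exact Orb_card_eq_two_pow φ

def wdat (φ : G r →* Equiv.Perm (Fin (n + 1))) :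
    (Fin r → ZMod 2) →ₗ[ZMod 2] (Fin (Nat.log 2 ((Orb φ).card - 1 + 1)) → ZMod 2) :=
  Classical.choose (exists_w φ _ (Orb_card_pow_log φ))

lemma wdat_ker (φ : G r →* Equiv.Perm (Fin (n + 1))) :
    LinearMap.ker (wdat φ) = stab φ :=
  Classical.choose_spec (exists_w φ _ (Orb_card_pow_log φ))

def secdat (φ : G r →* Equiv.Perm (Fin (n + 1))) : Fin ((Orb φ).card - 1) → G r :=
  fun i => Gsec φ (((Orb φ).erase 0).orderIsoOfFin (Orb_erase_card φ) i : Fin (n + 1))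

def restdat (φ : G r →* Equiv.Perm (Fin (n + 1))) :
    G r →* Equiv.Perm (Fin (n - ((Orb φ).card - 1))) :=
  restdatB φ (Orb φ) (Orb_inv φ) _ (Orb_compl_card φ)

lemma Orb_erase_mem_powersetCard (φ : G r →* Equiv.Perm (Fin (n + 1))) :
    (Orb φ).erase 0 ∈ powersetCard ((Orb φ).card - 1) ((univ : Finset (Fin (n + 1))).erase 0) := by
  rw [mem_powersetCard]
  exact ⟨erase_subset_erase _ (subset_univ _), Orb_erase_card φ⟩

/-- reconstruction: the recorded data determines the homomorphism. -/
lemma hom_ext (φ ψ : G r →* Equiv.Perm (Fin (n + 1)))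
    (hO : Orb φ = Orb ψ)
    (hW : ∀ g : G r, φ g 0 = 0 ↔ ψ g 0 = 0)
    (hS : ∀ y ∈ (Orb φ).erase 0, Gsec φ y = Gsec ψ y)
    (hrest : ∀ (g : G r) (y : Fin (n + 1)), y ∉ Orb φ → φ g y = ψ g y) : φ = ψ := by
  have hSS : ∀ y ∈ Orb φ, φ (SS φ y) 0 = y ∧ ψ (SS φ y) 0 = y := by
    intro y hy
    by_cases h0 : y = 0
    · subst h0
      constructor <;> simp [SS]
    · have hy' : y ∈ (Orb φ).erase 0 := mem_erase.2 ⟨h0, hy⟩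
      have e1 : SS φ y = Gsec φ y := if_neg h0
      have e2 : SS φ y = Gsec ψ y := e1.trans (hS y hy')
      refine ⟨by rw [e1]; exact Gsec_spec φ hy, by rw [e2]; exact Gsec_spec ψ (hO ▸ hy)⟩
  have key0 : ∀ g : G r, φ g 0 = ψ g 0 := by
    intro g
    have hyφ : φ g 0 ∈ Orb φ := mem_image.2 ⟨g, mem_univ _, rfl⟩
    set y := φ g 0 with hy
    have h1 : φ ((SS φ y)⁻¹ * g) 0 = 0 := by
      rw [map_mul, Equiv.Perm.mul_apply, ← hy, map_inv, Equiv.Perm.inv_def]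
      exact (Equiv.symm_apply_eq _).2 (hSS y hyφ).1.symm
    have h2 : ψ ((SS φ y)⁻¹ * g) 0 = 0 := (hW _).1 h1
    rw [map_mul, Equiv.Perm.mul_apply, map_inv] at h2
    have h3 : ψ g 0 = ψ (SS φ y) 0 := by
      have := congrArg (ψ (SS φ y)) h2
      simpa using this
    rw [h3, (hSS y hyφ).2]
  have keyO : ∀ (g : G r) (y : Fin (n + 1)), y ∈ Orb φ → φ g y = ψ g y := by
    intro g y hy
    have h1 : φ g y = φ (g * SS φ y) 0 := by
      rw [map_mul, Equiv.Perm.mul_apply, (hSS y hy).1]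
    have h2 : ψ g y = ψ (g * SS φ y) 0 := by
      rw [map_mul, Equiv.Perm.mul_apply, (hSS y hy).2]
    rw [h1, h2, key0]
  refine MonoidHom.ext fun g => Equiv.ext fun x => ?_
  by_cases hx : x ∈ Orb φ
  · exact keyO g x hx
  · exact hrest g x hx


lemma orderIsoOfFin_congr' {s t : Finset (Fin (n + 1))} (hst : s = t) {k k' : ℕ}
    (hk : k = k') (hs : s.card = k) (ht : t.card = k') {i : Fin k} {i' : Fin k'}
    (hi : i.1 = i'.1) : (s.orderIsoOfFin hs i : Fin (n + 1)) = t.orderIsoOfFin ht i' := by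
  subst hst; subst hk
  cases Fin.ext hi
  rfl

lemma cEquivB_congr' {B B' : Finset (Fin (n + 1))} (h : B = B') {m m' : ℕ} (hmm : m = m')
    (hm : Bᶜ.card = m) (hm' : B'ᶜ.card = m') {y : Fin (n + 1)} (hy : y ∈ Bᶜ) (hy' : y ∈ B'ᶜ) :
    (cEquivB B m hm ⟨y, hy⟩).1 = (cEquivB B' m' hm' ⟨y, hy'⟩).1 := by
  subst h; subst hmm; rfl

/-- the target type for the orbit-data encoding. -/
abbrev TT (r n : ℕ) (j : Fin (2 ^ r)) : Type :=
  (↥(powersetCard j.1 ((univ : Finset (Fin (n + 1))).erase 0))) ×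
    ((Fin r → ZMod 2) →ₗ[ZMod 2] (Fin (Nat.log 2 (j.1 + 1)) → ZMod 2)) ×
    (Fin j.1 → G r) × (G r →* Equiv.Perm (Fin (n - j.1)))

instance (r n : ℕ) (j : Fin (2 ^ r)) : Finite (TT r n j) := by
  unfold TT
  haveI : Finite ((Fin r → ZMod 2) →ₗ[ZMod 2] (Fin (Nat.log 2 (j.1 + 1)) → ZMod 2)) :=
    DFunLike.finite _
  haveI : ∀ m : ℕ, Finite (G r →* Equiv.Perm (Fin m)) := fun m => DFunLike.finite _
  infer_instance

lemma jlt (φ : G r →* Equiv.Perm (Fin (n + 1))) : (Orb φ).card - 1 < 2 ^ r := by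
  have h1 := Orb_card_le φ
  have h2 := Orb_card_pos φ
  omega

/-- the encoding map. -/
def Edat (φ : G r →* Equiv.Perm (Fin (n + 1))) : (j : Fin (2 ^ r)) × TT r n j :=
  ⟨⟨(Orb φ).card - 1, jlt φ⟩,
    ⟨⟨(Orb φ).erase 0, Orb_erase_mem_powersetCard φ⟩, wdat φ, secdat φ, restdat φ⟩⟩

lemma Edat_injective : Function.Injective (Edat (r := r) (n := n)) := by
  intro φ ψ hE
  have hdj : (Orb φ).card - 1 = (Orb ψ).card - 1 := congrArg (fun p => p.1.1) hE
  have hd : (Orb φ).card = (Orb ψ).card := by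
    have := Orb_card_pos φ; have := Orb_card_pos ψ; omega
  have hO : Orb φ = Orb ψ := by
    have h1 := congrArg
      (fun p : (j : Fin (2 ^ r)) × TT r n j => insert (0 : Fin (n + 1)) p.2.1.1) hE
    simp only [Edat] at h1
    rwa [insert_erase (zero_mem_Orb φ), insert_erase (zero_mem_Orb ψ)] at h1
  have hstab : stab φ = stab ψ := by
    have h2 := congrArg (fun p : (j : Fin (2 ^ r)) × TT r n j =>
      (fun (v : Fin r → ZMod 2) (i : ℕ) =>
        if h : i < Nat.log 2 (p.1.1 + 1) then p.2.2.1 v ⟨i, h⟩ else 0)) hE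
    simp only [Edat] at h2
    have hc : Nat.log 2 ((Orb φ).card - 1 + 1) = Nat.log 2 ((Orb ψ).card - 1 + 1) := by
      rw [hdj]
    have hww : ∀ (v : Fin r → ZMod 2) (i : ℕ) (hi : i < Nat.log 2 ((Orb φ).card - 1 + 1))
        (hi2 : i < Nat.log 2 ((Orb ψ).card - 1 + 1)),
        wdat φ v ⟨i, hi⟩ = wdat ψ v ⟨i, hi2⟩ := by
      intro v i hi hi2
      have h3 := congrFun (congrFun h2 v) i
      erw [dif_pos hi, dif_pos hi2] at h3; exact h3
    rw [← wdat_ker φ, ← wdat_ker ψ]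
    ext v
    simp only [LinearMap.mem_ker]
    constructor
    · intro h
      funext i
      obtain ⟨i, hi⟩ := i
      have hi' : i < Nat.log 2 ((Orb φ).card - 1 + 1) := by omega
      have := hww v i hi' hi
      rw [← this, h]
      rfl
    · intro h
      funext i
      obtain ⟨i, hi⟩ := i
      have hi2 : i < Nat.log 2 ((Orb ψ).card - 1 + 1) := by omega
      have := hww v i hi hi2
      rw [this, h]
      rfl
  have hW : ∀ g : G r, φ g 0 = 0 ↔ ψ g 0 = 0 := by
    intro g
    have h1 : Multiplicative.toAdd g ∈ stab φ ↔ Multiplicative.toAdd g ∈ stab ψ := by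
      rw [hstab]
    simpa only [mem_stab_iff, ofAdd_toAdd] using h1
  have hS : ∀ y ∈ (Orb φ).erase 0, Gsec φ y = Gsec ψ y := by
    intro y hy
    have h3 := congrArg (fun p : (j : Fin (2 ^ r)) × TT r n j =>
      (fun k : ℕ => if h : k < p.1.1 then p.2.2.2.1 ⟨k, h⟩ else 1)) hE
    simp only [Edat] at h3
    have hscard : ((Orb φ).erase 0).card = (Orb φ).card - 1 := Orb_erase_card φ
    set i : Fin ((Orb φ).card - 1) :=
      (((Orb φ).erase 0).orderIsoOfFin hscard).symm ⟨y, hy⟩ with hidef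
    have hival : ((((Orb φ).erase 0).orderIsoOfFin hscard) i : Fin (n + 1)) = y := by
      rw [hidef, OrderIso.apply_symm_apply]
    have hi2 : i.1 < (Orb ψ).card - 1 := by have := i.2; omega
    have h4 := congrFun h3 i.1
    erw [dif_pos i.2, dif_pos hi2] at h4
    have hL : secdat φ ⟨i.1, i.2⟩ = Gsec φ y := by
      simp only [secdat, Fin.eta]
      rw [hival]
    have hR : secdat ψ ⟨i.1, hi2⟩ = Gsec ψ y := by
      simp only [secdat]
      have heq := orderIsoOfFin_congr' (s := (Orb ψ).erase 0) (t := (Orb φ).erase 0)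
        (by rw [hO]) hdj.symm (Orb_erase_card ψ) hscard
        (i := ⟨i.1, hi2⟩) (i' := i) rfl
      rw [heq, hival]
    rw [hL, hR] at h4
    exact h4
  have hrest : ∀ (g : G r) (y : Fin (n + 1)), y ∉ Orb φ → φ g y = ψ g y := by
    intro g y hy
    have h5 := congrArg (fun p : (j : Fin (2 ^ r)) × TT r n j =>
      (fun (g : G r) (k : ℕ) =>
        if h : k < n - p.1.1 then ((p.2.2.2.2 g ⟨k, h⟩ : Fin (n - p.1.1)) : ℕ) else 0)) hE
    simp only [Edat] at h5
    have hyc : y ∈ (Orb φ)ᶜ := Finset.mem_compl.2 hy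
    have hyc' : y ∈ (Orb ψ)ᶜ := by rwa [← hO]
    set x : Fin (n - ((Orb φ).card - 1)) :=
      cEquivB (Orb φ) _ (Orb_compl_card φ) ⟨y, hyc⟩ with hxdef
    have hx2 : x.1 < n - ((Orb ψ).card - 1) := by have := x.2; omega
    have h6 := congrFun (congrFun h5 g) x.1
    erw [dif_pos x.2, dif_pos hx2] at h6
    have hxval : x.1 = (cEquivB (Orb ψ) _ (Orb_compl_card ψ) ⟨y, hyc'⟩).1 :=
      cEquivB_congr' hO (by rw [hdj]) _ _ hyc hyc'
    have hxψ : (⟨x.1, hx2⟩ : Fin (n - ((Orb ψ).card - 1)))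
        = cEquivB (Orb ψ) _ (Orb_compl_card ψ) ⟨y, hyc'⟩ := Fin.ext hxval
    have hL : restdat φ g ⟨x.1, x.2⟩
        = cEquivB (Orb φ) _ (Orb_compl_card φ) ⟨φ g y, (Orb_inv φ g y).1 hyc⟩ :=
      restdatB_spec φ (Orb φ) (Orb_inv φ) _ (Orb_compl_card φ) g hyc
    have hR : restdat ψ g ⟨x.1, hx2⟩
        = cEquivB (Orb ψ) _ (Orb_compl_card ψ) ⟨ψ g y, (Orb_inv ψ g y).1 hyc'⟩ := by
      rw [hxψ]
      exact restdatB_spec ψ (Orb ψ) (Orb_inv ψ) _ (Orb_compl_card ψ) g hyc'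
    have hgy : ψ g y ∈ (Orb φ)ᶜ := by rw [hO]; exact (Orb_inv ψ g y).1 hyc'
    have h7 : (cEquivB (Orb φ) _ (Orb_compl_card φ) ⟨φ g y, (Orb_inv φ g y).1 hyc⟩).1
        = (cEquivB (Orb φ) _ (Orb_compl_card φ) ⟨ψ g y, hgy⟩).1 := by
      calc (cEquivB (Orb φ) _ (Orb_compl_card φ) ⟨φ g y, (Orb_inv φ g y).1 hyc⟩).1
          = (restdat φ g ⟨x.1, x.2⟩).1 := (congrArg Fin.val hL).symm
        _ = (restdat ψ g ⟨x.1, hx2⟩).1 := h6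
        _ = (cEquivB (Orb ψ) _ (Orb_compl_card ψ) ⟨ψ g y, (Orb_inv ψ g y).1 hyc'⟩).1 :=
            congrArg Fin.val hR
        _ = (cEquivB (Orb φ) _ (Orb_compl_card φ) ⟨ψ g y, hgy⟩).1 :=
            cEquivB_congr' hO.symm (by rw [hdj]) _ _ _ hgy
    have h8 := (cEquivB (Orb φ) _ (Orb_compl_card φ)).injective (Fin.ext h7)
    exact congrArg Subtype.val h8
  exact hom_ext φ ψ hO hW hS hrest


instance (r m : ℕ) : Finite (G r →* Equiv.Perm (Fin m)) := DFunLike.finite _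

lemma card_sigma_fin {k : ℕ} (T : Fin k → Type) [∀ j, Finite (T j)] :
    Nat.card ((j : Fin k) × T j) = ∑ j, Nat.card (T j) := by
  letI : ∀ j, Fintype (T j) := fun j => Fintype.ofFinite _
  rw [Nat.card_eq_fintype_card, Fintype.card_sigma]
  exact Finset.sum_congr rfl fun j _ => (Nat.card_eq_fintype_card).symm

lemma card_hom_zero (r : ℕ) : Nat.card (G r →* Equiv.Perm (Fin 0)) = 1 := by
  rw [Nat.card_eq_one_iff_unique]
  exact ⟨⟨fun f g => MonoidHom.ext fun a => Equiv.ext fun x => x.elim0⟩, ⟨1⟩⟩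

lemma card_TT (r n : ℕ) (j : Fin (2 ^ r)) :
    Nat.card (TT r n j) =
      n.choose j.1 * 2 ^ (r * Nat.log 2 (j.1 + 1)) * (2 ^ r) ^ j.1 *
        Nat.card (G r →* Equiv.Perm (Fin (n - j.1))) := by
  haveI : Finite ((Fin r → ZMod 2) →ₗ[ZMod 2] (Fin (Nat.log 2 (j.1 + 1)) → ZMod 2)) :=
    DFunLike.finite _
  rw [TT, Nat.card_prod, Nat.card_prod, Nat.card_prod]
  have c1 : Nat.card ↥(powersetCard j.1 ((univ : Finset (Fin (n + 1))).erase 0))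
      = n.choose j.1 := by
    rw [Nat.card_eq_finsetCard, card_powersetCard]
    congr 1
    rw [card_erase_of_mem (mem_univ _), card_univ, Fintype.card_fin]
    omega
  have c2 : Nat.card ((Fin r → ZMod 2) →ₗ[ZMod 2] (Fin (Nat.log 2 (j.1 + 1)) → ZMod 2))
      = 2 ^ (r * Nat.log 2 (j.1 + 1)) := by
    rw [Nat.card_congr (LinearMap.toMatrix'.toEquiv)]
    have : Nat.card (Matrix (Fin (Nat.log 2 (j.1 + 1))) (Fin r) (ZMod 2))
        = Nat.card (Fin (Nat.log 2 (j.1 + 1)) → Fin r → ZMod 2) := rfl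
    rw [this, Nat.card_fun, Nat.card_fun, Nat.card_zmod, Nat.card_eq_fintype_card,
      Nat.card_eq_fintype_card, Fintype.card_fin, Fintype.card_fin, ← pow_mul]
  have c3 : Nat.card (Fin j.1 → G r) = (2 ^ r) ^ j.1 := by
    rw [Nat.card_fun, ncardG, Nat.card_eq_fintype_card, Fintype.card_fin]
  rw [c1, c2, c3]
  ring

lemma card_hom_succ_le (r n : ℕ) :
    Nat.card (G r →* Equiv.Perm (Fin (n + 1))) ≤
      ∑ j ∈ Finset.range (2 ^ r),
        n.choose j * 2 ^ (r * Nat.log 2 (j + 1)) * (2 ^ r) ^ j *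
          Nat.card (G r →* Equiv.Perm (Fin (n - j))) := by
  have h1 : Nat.card (G r →* Equiv.Perm (Fin (n + 1)))
      ≤ Nat.card ((j : Fin (2 ^ r)) × TT r n j) :=
    Nat.card_le_card_of_injective _ (Edat_injective (r := r) (n := n))
  rw [card_sigma_fin (TT r n)] at h1
  refine h1.trans (le_of_eq ?_)
  rw [← Fin.sum_univ_eq_sum_range (fun j =>
    n.choose j * 2 ^ (r * Nat.log 2 (j + 1)) * (2 ^ r) ^ j *
      Nat.card (G r →* Equiv.Perm (Fin (n - j)))) (2 ^ r)]
  exact Finset.sum_congr rfl fun j _ => card_TT r n j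


lemma hom_card_bound (r : ℕ) (hr : 1 ≤ r) :
    ∀ n : ℕ, 1 ≤ n → (Nat.card (G r →* Equiv.Perm (Fin n)) : ℝ) ≤
      4 ^ (r * n) * (n : ℝ) ^ r * (n : ℝ) ^ ((1 - ((1 : ℝ) / 2) ^ r) * n) := by
  intro n
  induction n using Nat.strong_induction_on with
  | _ n IH =>
    intro hn
    obtain ⟨n', rfl⟩ : ∃ m, n = m + 1 := ⟨n - 1, by omega⟩
    set ε : ℝ := ((1 : ℝ) / 2) ^ r with hε
    set A : ℝ := ((n' + 1 : ℕ) : ℝ) with hA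
    have hε0 : 0 ≤ ε := by positivity
    have hε1 : ε * (2 : ℝ) ^ r = 1 := by rw [hε, ← mul_pow]; norm_num
    have hεle : ε ≤ 1 := by
      rw [hε]
      exact pow_le_one₀ (by norm_num) (by norm_num)
    have hN : (1 : ℝ) ≤ A := by rw [hA]; exact_mod_cast Nat.succ_le_succ (Nat.zero_le n')
    have hA0 : (0 : ℝ) < A := by linarith
    have hcast : (Nat.card (G r →* Equiv.Perm (Fin (n' + 1))) : ℝ)
        ≤ ∑ j ∈ Finset.range (2 ^ r),
            ((n'.choose j : ℝ) * 2 ^ (r * Nat.log 2 (j + 1)) * ((2 : ℝ) ^ r) ^ j *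
              (Nat.card (G r →* Equiv.Perm (Fin (n' - j))) : ℝ)) := by
      exact_mod_cast card_hom_succ_le r n'
    have hterm : ∀ j ∈ Finset.range (2 ^ r),
        (n'.choose j : ℝ) * 2 ^ (r * Nat.log 2 (j + 1)) * ((2 : ℝ) ^ r) ^ j *
            (Nat.card (G r →* Equiv.Perm (Fin (n' - j))) : ℝ)
          ≤ 4 ^ (r * n') * A ^ r * A ^ ((1 - ε) * A) := by
      intro j hj
      have hj' : j < 2 ^ r := Finset.mem_range.1 hj
      by_cases hjn : j ≤ n'
      · -- subcall bound
        have hsub : (Nat.card (G r →* Equiv.Perm (Fin (n' - j))) : ℝ)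
            ≤ 4 ^ (r * (n' - j)) * A ^ r * A ^ ((1 - ε) * ((n' - j : ℕ) : ℝ)) := by
          rcases Nat.eq_zero_or_pos (n' - j) with h0 | hpos
          · rw [h0, card_hom_zero]
            simp only [Nat.cast_zero, mul_zero, Real.rpow_zero, Nat.mul_zero, pow_zero,
              one_mul, mul_one, Nat.cast_one]
            exact one_le_pow₀ hN
          · have hlt : n' - j < n' + 1 := by omega
            have IH' := IH (n' - j) hlt hpos
            refine IH'.trans ?_
            have hble : ((n' - j : ℕ) : ℝ) ≤ A := by
              rw [hA]; exact_mod_cast Nat.le_of_lt hlt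
            have hbnn : (0 : ℝ) ≤ ((n' - j : ℕ) : ℝ) := Nat.cast_nonneg _
            have hexp : (0 : ℝ) ≤ (1 - ε) * ((n' - j : ℕ) : ℝ) := by
              apply mul_nonneg (by linarith) hbnn
            gcongr
        have hchoose : (n'.choose j : ℝ) ≤ A ^ j := by
          have h1 : (n'.choose j : ℝ) ≤ ((n' : ℕ) : ℝ) ^ j := by
            exact_mod_cast Nat.choose_le_pow n' j
          refine h1.trans ?_
          apply pow_le_pow_left₀ (Nat.cast_nonneg _)
          rw [hA]; exact_mod_cast Nat.le_succ n'
        have hlog : ((2 : ℝ)) ^ (r * Nat.log 2 (j + 1)) ≤ (2 : ℝ) ^ (r * j) := by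
          have h2 : Nat.log 2 (j + 1) ≤ j := by
            calc Nat.log 2 (j + 1) ≤ Nat.log 2 (2 ^ j) :=
                  Nat.log_mono_right (Nat.succ_le_of_lt (j.lt_two_pow_self))
              _ = j := Nat.log_pow (by norm_num) j
          apply pow_le_pow_right₀ (by norm_num)
          exact Nat.mul_le_mul_left r h2
        have hmain : (n'.choose j : ℝ) * 2 ^ (r * Nat.log 2 (j + 1)) * ((2 : ℝ) ^ r) ^ j *
            (Nat.card (G r →* Equiv.Perm (Fin (n' - j))) : ℝ)
            ≤ A ^ j * (2 : ℝ) ^ (r * j) * ((2 : ℝ) ^ r) ^ j *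
              (4 ^ (r * (n' - j)) * A ^ r * A ^ ((1 - ε) * ((n' - j : ℕ) : ℝ))) := by
          gcongr <;> first
            | exact hchoose
            | exact hlog
            | exact hsub
            | positivity
        refine hmain.trans ?_
        have e1 : A ^ j * (2 : ℝ) ^ (r * j) * ((2 : ℝ) ^ r) ^ j *
            (4 ^ (r * (n' - j)) * A ^ r * A ^ ((1 - ε) * ((n' - j : ℕ) : ℝ)))
            = 4 ^ (r * n') * A ^ r *
              (A ^ ((j : ℝ)) * A ^ ((1 - ε) * ((n' - j : ℕ) : ℝ))) := by
          have e2 : (2 : ℝ) ^ (r * j) * ((2 : ℝ) ^ r) ^ j = (4 : ℝ) ^ (r * j) := by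
            rw [← pow_mul, ← pow_add, show (4 : ℝ) = 2 ^ 2 by norm_num, ← pow_mul]
            congr 1
            ring
          have e3 : (4 : ℝ) ^ (r * j) * (4 : ℝ) ^ (r * (n' - j)) = (4 : ℝ) ^ (r * n') := by
            rw [← pow_add]
            congr 1
            have : j + (n' - j) = n' := by omega
            calc r * j + r * (n' - j) = r * (j + (n' - j)) := by ring
              _ = r * n' := by rw [this]
          have e4 : A ^ ((j : ℝ)) = A ^ j := Real.rpow_natCast A j
          rw [e4]
          calc A ^ j * (2 : ℝ) ^ (r * j) * ((2 : ℝ) ^ r) ^ j *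
              (4 ^ (r * (n' - j)) * A ^ r * A ^ ((1 - ε) * ((n' - j : ℕ) : ℝ)))
              = ((2 : ℝ) ^ (r * j) * ((2 : ℝ) ^ r) ^ j * (4 : ℝ) ^ (r * (n' - j))) * A ^ r *
                (A ^ j * A ^ ((1 - ε) * ((n' - j : ℕ) : ℝ))) := by ring
            _ = ((4 : ℝ) ^ (r * j) * (4 : ℝ) ^ (r * (n' - j))) * A ^ r *
                (A ^ j * A ^ ((1 - ε) * ((n' - j : ℕ) : ℝ))) := by rw [e2]
            _ = (4 : ℝ) ^ (r * n') * A ^ r *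
                (A ^ j * A ^ ((1 - ε) * ((n' - j : ℕ) : ℝ))) := by rw [e3]
        rw [e1]
        have hfin : A ^ ((j : ℝ)) * A ^ ((1 - ε) * ((n' - j : ℕ) : ℝ)) ≤ A ^ ((1 - ε) * A) := by
          rw [← Real.rpow_add hA0]
          apply Real.rpow_le_rpow_of_exponent_le hN
          have hc2 : ((n' - j : ℕ) : ℝ) = (n' : ℝ) - (j : ℝ) := by
            rw [Nat.cast_sub hjn]
          rw [hc2, hA]
          push_cast
          have hj2 : (j : ℝ) + 1 ≤ (2 : ℝ) ^ r := by exact_mod_cast hj'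
          have hεj : ε * ((j : ℝ) + 1) ≤ 1 := by
            calc ε * ((j : ℝ) + 1) ≤ ε * (2 : ℝ) ^ r :=
                mul_le_mul_of_nonneg_left hj2 hε0
              _ = 1 := hε1
          nlinarith
        calc 4 ^ (r * n') * A ^ r * (A ^ ((j : ℝ)) * A ^ ((1 - ε) * ((n' - j : ℕ) : ℝ)))
            ≤ 4 ^ (r * n') * A ^ r * (A ^ ((1 - ε) * A)) := by
              apply mul_le_mul_of_nonneg_left hfin
              positivity
          _ = 4 ^ (r * n') * A ^ r * A ^ ((1 - ε) * A) := by ring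
      · have h0 : n'.choose j = 0 := Nat.choose_eq_zero_of_lt (by omega)
        rw [h0]
        rw [Nat.cast_zero, zero_mul, zero_mul, zero_mul]
        positivity
    have hsum : ∑ j ∈ Finset.range (2 ^ r),
        ((n'.choose j : ℝ) * 2 ^ (r * Nat.log 2 (j + 1)) * ((2 : ℝ) ^ r) ^ j *
          (Nat.card (G r →* Equiv.Perm (Fin (n' - j))) : ℝ))
        ≤ (2 ^ r : ℕ) • (4 ^ (r * n') * A ^ r * A ^ ((1 - ε) * A)) := by
      have := Finset.sum_le_card_nsmul (Finset.range (2 ^ r)) _ _ hterm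
      simpa using this
    refine hcast.trans (hsum.trans ?_)
    rw [nsmul_eq_mul]
    push_cast
    have hfour : ((2 : ℝ) ^ r) * 4 ^ (r * n') ≤ 4 ^ (r * (n' + 1)) := by
      have h1 : ((2 : ℝ) ^ r) ≤ (4 : ℝ) ^ r := by
        apply pow_le_pow_left₀ (by norm_num) (by norm_num)
      calc ((2 : ℝ) ^ r) * 4 ^ (r * n') ≤ (4 : ℝ) ^ r * 4 ^ (r * n') := by
            apply mul_le_mul_of_nonneg_right h1
            positivity
        _ = 4 ^ (r * (n' + 1)) := by
            rw [← pow_add]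
            congr 1
            ring
    calc (2 : ℝ) ^ r * (4 ^ (r * n') * A ^ r * A ^ ((1 - ε) * A))
        = ((2 : ℝ) ^ r * 4 ^ (r * n')) * (A ^ r * A ^ ((1 - ε) * A)) := by ring
      _ ≤ 4 ^ (r * (n' + 1)) * (A ^ r * A ^ ((1 - ε) * A)) := by
          apply mul_le_mul_of_nonneg_right hfour
          positivity
      _ = 4 ^ (r * (n' + 1)) * A ^ r * A ^ ((1 - ε) * A) := by ring

end

end CardHomAux

/-- For `r ≥ 1`, the number of homomorphisms from `(ℤ/2ℤ)^r` to `Sym(n)` is at most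
`4^{rn} · n^r · n^{(1 - 2^{-r})n}` for all `n ≥ 1`. -/
theorem card_hom_elementary_abelian_two_perm_le (r n : ℕ) (hr : 1 ≤ r) (hn : 1 ≤ n) :
    (Nat.card (Multiplicative (Fin r → ZMod 2) →* Equiv.Perm (Fin n)) : ℝ) ≤
      4 ^ (r * n) * (n : ℝ) ^ r *
        (n : ℝ) ^ ((1 - ((1 : ℝ) / 2) ^ r) * n) := by
  exact CardHomAux.hom_card_bound r hr n hn
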